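/- There is a constant c > 0 with (|w|² + 1)/(|w| + 1) ≥ c for all complex w; consequently there exists ε₀ > 0 such that for all 0 < ε < ε₀, all r > 0 and all real θ, with w = r - 1/r + e^{iθ}, one has e^{2iθ}(|w|² + 1) + ε e^{iθ} w - √(2ε+ε²) e^{-iθ}(w - 2cos θ) ≠ 0. -/

import Mathlib

open Complex

/-- There is `c > 0` with `(|w|²+1)/(|w|+1) ≥ c` for all `w : ℂ`; consequently there is
`ε₀ > 0` such that for all `0 < ε < ε₀`, all `r > 0` and all real `θ`, setting
`w = r - 1/r + e^{iθ}`, one has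
`e^{2iθ}(|w|²+1) + ε e^{iθ} w - √(2ε+ε²) e^{-iθ}(w - 2cos θ) ≠ 0`. -/
theorem stmt6 :
    (∃ c : ℝ, 0 < c ∧ ∀ w : ℂ, c ≤ (‖w‖ ^ 2 + 1) / (‖w‖ + 1)) ∧
    (∃ ε₀ : ℝ, 0 < ε₀ ∧ ∀ ε : ℝ, 0 < ε → ε < ε₀ → ∀ r : ℝ, 0 < r → ∀ θ : ℝ,
      Complex.exp (2 * θ * Complex.I) *
          ((‖(r : ℂ) - 1 / (r : ℂ) + Complex.exp (θ * Complex.I)‖ : ℝ) ^ 2 + 1)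
        + (ε : ℂ) * Complex.exp (θ * Complex.I) *
            ((r : ℂ) - 1 / (r : ℂ) + Complex.exp (θ * Complex.I))
        - (Real.sqrt (2 * ε + ε ^ 2) : ℂ) * Complex.exp (-θ * Complex.I) *
            (((r : ℂ) - 1 / (r : ℂ) + Complex.exp (θ * Complex.I)) - 2 * (Real.cos θ : ℂ))
        ≠ 0) := by
  constructor
  · refine ⟨1/2, by norm_num, fun w => ?_⟩
    have h0 : (0:ℝ) ≤ ‖w‖ := norm_nonneg w
    rw [le_div_iff₀ (by positivity)]
    nlinarith [sq_nonneg (‖w‖ - 1/2)]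
  · refine ⟨1/100, by norm_num, fun ε hε hε' r hr θ => ?_⟩
    set w : ℂ := (r:ℂ) - 1/(r:ℂ) + Complex.exp (θ*I) with hw
    set t : ℝ := ‖w‖ with htdef
    intro heq
    have ht : 0 ≤ t := norm_nonneg w
    have habs1 : ‖Complex.exp (2*θ*I)‖ = 1 := by
      rw [Complex.norm_exp]; simp
    have habs2 : ‖Complex.exp ((θ:ℂ)*I)‖ = 1 := by
      rw [Complex.norm_exp]; simp
    have habs3 : ‖Complex.exp (-(θ:ℂ)*I)‖ = 1 := by
      rw [Complex.norm_exp]; simp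
    -- s bounds
    set s : ℝ := Real.sqrt (2*ε + ε^2) with hsdef
    have hs0 : 0 ≤ s := Real.sqrt_nonneg _
    have hs2 : s^2 = 2*ε + ε^2 := Real.sq_sqrt (by nlinarith)
    have hslt : s < 1/5 := by nlinarith
    -- rearrange
    have hA : Complex.exp (2*θ*I) * (((t^2 + 1 : ℝ)):ℂ) =
        (s:ℂ) * Complex.exp (-(θ:ℂ)*I) * (w - 2*(Real.cos θ : ℂ))
        - (ε:ℂ) * Complex.exp ((θ:ℂ)*I) * w := by
      push_cast
      push_cast at heq
      linear_combination heq
    have habsA : ‖Complex.exp (2*θ*I) * (((t^2 + 1 : ℝ)):ℂ)‖ = t^2 + 1 := by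
      rw [norm_mul, habs1, one_mul, Complex.norm_real, Real.norm_eq_abs, _root_.abs_of_nonneg (by positivity : (0:ℝ) ≤ t^2+1)]
    have habsB : ‖(ε:ℂ) * Complex.exp ((θ:ℂ)*I) * w‖ = ε * t := by
      rw [norm_mul, norm_mul, habs2, Complex.norm_real, Real.norm_eq_abs, _root_.abs_of_nonneg hε.le, mul_one]
    have hwc : ‖w - 2*(Real.cos θ : ℂ)‖ ≤ t + 2 := by
      have h1 : ‖w - 2*(Real.cos θ : ℂ)‖ ≤
          ‖w‖ + ‖2*(Real.cos θ : ℂ)‖ :=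
        norm_sub_le w (2*(Real.cos θ : ℂ))
      have h2 : ‖2*(Real.cos θ : ℂ)‖ ≤ 2 := by
        rw [norm_mul]
        simp only [Complex.norm_real, Real.norm_eq_abs]
        have := Real.abs_cos_le_one θ
        have : ‖(2:ℂ)‖ = 2 := by norm_num
        rw [this]
        nlinarith [Real.abs_cos_le_one θ]
      linarith
    have habsC : ‖(s:ℂ) * Complex.exp (-(θ:ℂ)*I) * (w - 2*(Real.cos θ : ℂ))‖
        ≤ s * (t + 2) := by
      rw [norm_mul, norm_mul, habs3, Complex.norm_real, Real.norm_eq_abs, _root_.abs_of_nonneg hs0, mul_one]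
      exact mul_le_mul_of_nonneg_left hwc hs0
    have key : t^2 + 1 ≤ s * (t + 2) + ε * t := by
      calc t^2 + 1 = ‖Complex.exp (2*θ*I) * (((t^2 + 1 : ℝ)):ℂ)‖ := habsA.symm
        _ = ‖(s:ℂ) * Complex.exp (-(θ:ℂ)*I) * (w - 2*(Real.cos θ : ℂ))
            - (ε:ℂ) * Complex.exp ((θ:ℂ)*I) * w‖ := by rw [hA]
        _ ≤ ‖(s:ℂ) * Complex.exp (-(θ:ℂ)*I) * (w - 2*(Real.cos θ : ℂ))‖
            + ‖(ε:ℂ) * Complex.exp ((θ:ℂ)*I) * w‖ := by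
              exact norm_sub_le _ _
        _ ≤ s * (t + 2) + ε * t := by rw [habsB]; linarith
    nlinarith [sq_nonneg (t - 1/2)]
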